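/- arXiv:2104.12692 — 6 statements merged into one kernel-verified Lean document; each statement's English description precedes it below -/
import Mathlib

section
/- If a join semilattice S contains a semi-strong sub join-semilattice isomorphic to M_2, then S is not o-modular. -/
variable {α : Type*}

/-- The set of common lower bounds of `a` and `b` within `X`. -/
def L2 [Preorder α] (X : Set α) (a b : α) : Set α := {x ∈ X | x ≤ a ∧ x ≤ b}

/-- `T` is a sub join-semilattice: a subset closed under join. -/
def IsSubJoinSemilattice [SemilatticeSup α] (T : Set α) : Prop :=
  ∀ a ∈ T, ∀ b ∈ T, a ⊔ b ∈ T

/-- `T` is semi-strong in `S`. -/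
def SemiStrong [SemilatticeSup α] (T : Set α) : Prop :=
  ∀ a ∈ T, ∀ b ∈ T, L2 T a b = ∅ → L2 Set.univ a b = ∅

/-- `T` is strong in `S`. -/
def Strong [SemilatticeSup α] (T : Set α) : Prop :=
  ∀ a ∈ T, ∀ b ∈ T, L2 Set.univ a b ⊆ L2 T a b

/-- o-modularity of a join semilattice. -/
def OModular (α : Type*) [SemilatticeSup α] : Prop :=
  ∀ a b c : α, c ≤ a →
    lowerBounds {a, b ⊔ c} ⊆ lowerBounds (upperBounds (lowerBounds {a, b} ∪ {c}))

/-- `T` is (the underlying set of) a copy of `M₂`, the pentagon minus its bottom. -/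
def IsM2 [SemilatticeSup α] (T : Set α) : Prop :=
  ∃ a u b t : α, T = {a, u, b, t} ∧ a < u ∧ u < t ∧ b < t ∧
    ¬ a ≤ b ∧ ¬ b ≤ a ∧ ¬ u ≤ b ∧ ¬ b ≤ u ∧ a ⊔ b = t ∧ u ⊔ b = t

/-- `T` is (the underlying set of) a copy of `M₄`, the pentagon. -/
def IsM4 [SemilatticeSup α] (T : Set α) : Prop :=
  ∃ v a u b t : α, T = {v, a, u, b, t} ∧ v < a ∧ a < u ∧ u < t ∧ v < b ∧ b < t ∧
    ¬ a ≤ b ∧ ¬ b ≤ a ∧ ¬ u ≤ b ∧ ¬ b ≤ u ∧ a ⊔ b = t ∧ u ⊔ b = t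

theorem semiStrong_M2_not_oModular [SemilatticeSup α] (T : Set α)
    (hT : IsSubJoinSemilattice T) (hss : SemiStrong T) (hM2 : IsM2 T) :
    ¬ OModular α := by
  obtain ⟨a, u, b, t, hTeq, hau, hut, hbt, hab, hba, hub, hbu, hsab, hsub⟩ := hM2
  intro hOM
  have hu : u ∈ T := by rw [hTeq]; simp
  have hb : b ∈ T := by rw [hTeq]; simp
  -- L2 T u b = ∅
  have hL2T : L2 T u b = ∅ := by
    ext x
    simp only [L2, Set.mem_setOf_eq, Set.mem_empty_iff_false, iff_false, not_and]
    rintro hx hxu hxb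
    rw [hTeq] at hx
    rcases hx with rfl | rfl | rfl | rfl
    · exact hab hxb
    · exact hub hxb
    · exact hbu hxu
    · exact hbu (le_trans hbt.le hxu)
  have hL2S := hss u hu b hb hL2T
  -- lowerBounds {u, b} = ∅
  have hlb : lowerBounds ({u, b} : Set α) = ∅ := by
    ext x
    simp only [Set.mem_empty_iff_false, iff_false]
    intro hx
    have hxu : x ≤ u := hx (by simp)
    have hxb : x ≤ b := hx (by simp)
    have : x ∈ L2 Set.univ u b := ⟨Set.mem_univ x, hxu, hxb⟩
    rw [hL2S] at this
    exact this
  have key := hOM u b a hau.le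
  have hmem : u ∈ lowerBounds ({u, b ⊔ a} : Set α) := by
    intro x hx
    rcases hx with rfl | hx
    · exact le_rfl
    · rw [Set.mem_singleton_iff] at hx; subst hx; rw [sup_comm, hsab]; exact hut.le
  have h2 := key hmem
  have haub : a ∈ upperBounds (lowerBounds ({u, b} : Set α) ∪ {a}) := by
    intro x hx
    rcases hx with hx | hx
    · rw [hlb] at hx; exact hx.elim
    · rw [Set.mem_singleton_iff] at hx; subst hx; exact le_rfl
  exact absurd (h2 haub) hau.not_ge
end

section
/- If a join semilattice S contains a strong sub join-semilattice isomorphic to M_4, then S is not o-modular. -/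
variable {α : Type*}

theorem strong_M4_not_oModular [SemilatticeSup α] (T : Set α)
    (hT : IsSubJoinSemilattice T) (hs : Strong T) (hM4 : IsM4 T) :
    ¬ OModular α := by
  obtain ⟨v, a, u, b, t, hTeq, hva, hau, hut, hvb, hbt, hab, hba, hub, hbu, habt, hubt⟩ := hM4
  intro hom
  have hu : u ∈ T := by rw [hTeq]; simp
  have hb : b ∈ T := by rw [hTeq]; simp
  -- u is a lower bound of {u, b ⊔ a}
  have h1 : u ∈ lowerBounds {u, b ⊔ a} := by
    intro y hy
    rcases hy with h | h
    · exact h ▸ le_refl u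
    · have : b ⊔ a = t := by rw [sup_comm]; exact habt
      simp only [Set.mem_singleton_iff] at h
      rw [h, this]; exact hut.le
  have h2 := hom u b a hau.le h1
  -- a is an upper bound of lowerBounds {u, b} ∪ {a}
  have h3 : a ∈ upperBounds (lowerBounds {u, b} ∪ {a}) := by
    rintro y (hy | hy)
    · have hyu : y ≤ u := hy (by left; rfl)
      have hyb : y ≤ b := hy (by right; rfl)
      have : y ∈ L2 T u b := hs u hu b hb ⟨Set.mem_univ y, hyu, hyb⟩
      obtain ⟨hyT, _, _⟩ := this
      rw [hTeq] at hyT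
      rcases hyT with rfl | rfl | rfl | rfl | rfl
      · exact hva.le
      · exact absurd hyb hab
      · exact absurd hyb hub
      · exact absurd hyu hbu
      · exact absurd hyu (not_le_of_gt hut)
    · simp only [Set.mem_singleton_iff] at hy
      exact hy ▸ le_refl a
  exact absurd (h2 h3) (not_le_of_gt hau)
end

section
/- Let S be a join semilattice and a, b, c, x, y ∈ S satisfy: a < c, x ≤ c, x ≤ a ∨ b, for all z (z ≤ b and z ≤ c imply z ≤ y), a ≤ y, and x ≰ y. Then the set T = {a, b, a ∨ x, a ∨ b} is a sub join-semilattice of S with a < a∨x < a∨b, b < a∨b, a ∥ b, and a∨x ∥ b (i.e., T is isomorphic to M_2). -/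
variable {α : Type*}

theorem witnesses_give_M2 [SemilatticeSup α] (a b c x y : α)
    (h1 : a < c) (h2 : x ≤ c) (h3 : x ≤ a ⊔ b)
    (h4 : ∀ z, z ≤ b → z ≤ c → z ≤ y) (h5 : a ≤ y) (h6 : ¬ x ≤ y) :
    IsSubJoinSemilattice ({a, b, a ⊔ x, a ⊔ b} : Set α) ∧
      a < a ⊔ x ∧ a ⊔ x < a ⊔ b ∧ b < a ⊔ b ∧
      (¬ a ≤ b ∧ ¬ b ≤ a) ∧ (¬ a ⊔ x ≤ b ∧ ¬ b ≤ a ⊔ x) ∧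
      IsM2 ({a, b, a ⊔ x, a ⊔ b} : Set α) := by
  have hab : ¬ a ≤ b := fun h => h6 (h4 x (h3.trans (sup_le h (le_refl b))) h2)
  have hba : ¬ b ≤ a := fun h => h6 ((h3.trans (sup_le (le_refl a) h)).trans h5)
  have hax : a < a ⊔ x := lt_of_le_of_ne le_sup_left
    (fun h => h6 ((le_sup_right.trans h.symm.le).trans h5))
  have hxb : a ⊔ x ≤ a ⊔ b := sup_le le_sup_left h3
  have haxc : a ⊔ x ≤ c := sup_le h1.le h2
  have haxab : a ⊔ x < a ⊔ b := lt_of_le_of_ne hxb (by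
    intro h
    have hb : b ≤ c := (le_sup_right.trans h.symm.le).trans haxc
    exact h6 (h3.trans (sup_le h5 (h4 b le_rfl hb))))
  have hbab : b < a ⊔ b := lt_of_le_of_ne le_sup_right (by
    intro h
    exact h6 (h4 x (h3.trans h.symm.le) h2))
  have haxb : ¬ a ⊔ x ≤ b := fun h => hab (le_sup_left.trans h)
  have hbax : ¬ b ≤ a ⊔ x := fun h => h6 (h3.trans (sup_le h5 (h4 b le_rfl (h.trans haxc))))
  have hsub : IsSubJoinSemilattice ({a, b, a ⊔ x, a ⊔ b} : Set α) := by
    have hbx : b ⊔ (a ⊔ x) = a ⊔ b := le_antisymm (sup_le le_sup_right hxb)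
      (sup_le (le_sup_left.trans le_sup_right) le_sup_left)
    intro p hp q hq
    simp only [Set.mem_insert_iff, Set.mem_singleton_iff] at hp hq ⊢
    rcases hp with rfl|rfl|rfl|rfl <;> rcases hq with rfl|rfl|rfl|rfl <;>
      simp [sup_assoc, sup_comm, sup_left_comm, hbx, sup_idem,
        sup_of_le_left, sup_of_le_right, hax.le, hxb, hbab.le]
  refine ⟨hsub, hax, haxab, hbab, ⟨hab, hba⟩, ⟨haxb, hbax⟩, ?_⟩
  exact ⟨a, a ⊔ x, b, a ⊔ b, by ext z; simp; tauto, hax, haxab, hbab, hab, hba, haxb, hbax,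
    rfl, le_antisymm (sup_le hxb le_sup_right) (sup_le (le_sup_left.trans le_sup_left) le_sup_right)⟩
end

section
/- If a join semilattice S is not o-modular and there exist a,b,c,x,y witnessing the failure (a < c, x ≤ c, x ≤ a∨b, every common lower bound of b and c is ≤ y, a ≤ y, x ≰ y) with L_S(b,c) = ∅, then S contains a semi-strong sub join-semilattice isomorphic to M_2. -/
variable {α : Type*}

theorem not_oModular_empty_lb_semiStrong_M2 [SemilatticeSup α]
    (h : ¬ OModular α) (a b c x y : α)
    (h1 : a < c) (h2 : x ≤ c) (h3 : x ≤ a ⊔ b)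
    (h4 : ∀ z, z ≤ b → z ≤ c → z ≤ y) (h5 : a ≤ y) (h6 : ¬ x ≤ y)
    (hL : L2 Set.univ b c = ∅) :
    ∃ T : Set α, IsSubJoinSemilattice T ∧ SemiStrong T ∧ IsM2 T := by
  classical
  have hLbc : ∀ z : α, z ≤ b → z ≤ c → False := by
    intro z hzb hzc
    have : z ∈ L2 Set.univ b c := ⟨Set.mem_univ z, hzb, hzc⟩
    rw [hL] at this; exact this
  set u := a ⊔ x with hu
  set t := a ⊔ b with ht
  have hxa : ¬ x ≤ a := fun hx => h6 (hx.trans h5)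
  have hau : a < u := lt_of_le_of_ne le_sup_left (by
    intro he; exact hxa (he ▸ le_sup_right))
  have huc : u ≤ c := sup_le h1.le h2
  have hut : u ≤ t := sup_le le_sup_left h3
  have hab : ¬ a ≤ b := fun hab => hLbc a hab h1.le
  have hba : ¬ b ≤ a := fun hba => hLbc b le_rfl (hba.trans h1.le)
  have hbu : ¬ b ≤ u := fun hbu => hLbc b le_rfl (hbu.trans huc)
  have hub : ¬ u ≤ b := fun hub => hab (le_sup_left.trans hub)
  have hut' : u < t := lt_of_le_of_ne hut (by
    intro he; exact hbu (he ▸ le_sup_right))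
  have hbt : b < t := lt_of_le_of_ne le_sup_right (by
    intro he; exact hab (he ▸ le_sup_left))
  have hjoin1 : a ⊔ b = t := rfl
  have hjoin2 : u ⊔ b = t :=
    le_antisymm (sup_le hut le_sup_right)
      (sup_le (hau.le.trans le_sup_left) le_sup_right)
  have hA : a ∈ ({a, u, b, t} : Set α) := by simp
  have hU : u ∈ ({a, u, b, t} : Set α) := by simp
  have hB : b ∈ ({a, u, b, t} : Set α) := by simp
  have hT : t ∈ ({a, u, b, t} : Set α) := by simp
  refine ⟨{a, u, b, t}, ?_, ?_, a, u, b, t, rfl, hau, hut', hbt,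
    hab, hba, hub, hbu, hjoin1, hjoin2⟩
  · -- sub join semilattice
    intro p hp q hq
    simp only [Set.mem_insert_iff, Set.mem_singleton_iff] at hp hq
    rcases hp with rfl | rfl | rfl | rfl <;> rcases hq with rfl | rfl | rfl | rfl
    · rw [sup_idem]; exact hA
    · rw [sup_eq_right.mpr hau.le]; exact hU
    · rw [hjoin1]; exact hT
    · rw [sup_eq_right.mpr (hau.le.trans hut'.le)]; exact hT
    · rw [sup_eq_left.mpr hau.le]; exact hU
    · rw [sup_idem]; exact hU
    · rw [hjoin2]; exact hT
    · rw [sup_eq_right.mpr hut'.le]; exact hT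
    · rw [sup_comm, hjoin1]; exact hT
    · rw [sup_comm, hjoin2]; exact hT
    · rw [sup_idem]; exact hB
    · rw [sup_eq_right.mpr hbt.le]; exact hT
    · rw [sup_eq_left.mpr (hau.le.trans hut'.le)]; exact hT
    · rw [sup_eq_left.mpr hut'.le]; exact hT
    · rw [sup_eq_left.mpr hbt.le]; exact hT
    · rw [sup_idem]; exact hT
  · -- semi-strong
    intro p hp q hq hemp
    have hmem : ∀ w, w ∈ ({a, u, b, t} : Set α) → w ≤ p → w ≤ q → False := by
      intro w hw h1w h2w
      have : w ∈ L2 ({a, u, b, t} : Set α) p q := ⟨hw, h1w, h2w⟩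
      rw [hemp] at this; exact this
    have key : ∀ z : α, z ≤ p → z ≤ q → False := by
      intro z hzp hzq
      simp only [Set.mem_insert_iff, Set.mem_singleton_iff] at hp hq
      rcases hp with hp1 | hp1 | hp1 | hp1 <;> rcases hq with hq1 | hq1 | hq1 | hq1
      · exact hmem a hA hp1.ge hq1.ge
      · exact hmem a hA hp1.ge (hau.le.trans hq1.ge)
      · exact hLbc z (hzq.trans hq1.le) ((hzp.trans hp1.le).trans h1.le)
      · exact hmem a hA hp1.ge ((hau.le.trans hut'.le).trans hq1.ge)
      · exact hmem a hA (hau.le.trans hp1.ge) hq1.ge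
      · exact hmem u hU hp1.ge hq1.ge
      · exact hLbc z (hzq.trans hq1.le) ((hzp.trans hp1.le).trans huc)
      · exact hmem u hU hp1.ge (hut'.le.trans hq1.ge)
      · exact hLbc z (hzp.trans hp1.le) ((hzq.trans hq1.le).trans h1.le)
      · exact hLbc z (hzp.trans hp1.le) ((hzq.trans hq1.le).trans huc)
      · exact hmem b hB hp1.ge hq1.ge
      · exact hmem b hB hp1.ge (hbt.le.trans hq1.ge)
      · exact hmem a hA ((hau.le.trans hut'.le).trans hp1.ge) hq1.ge
      · exact hmem u hU (hut'.le.trans hp1.ge) hq1.ge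
      · exact hmem b hB (hbt.le.trans hp1.ge) hq1.ge
      · exact hmem t hT hp1.ge hq1.ge
    ext z
    simp only [L2, Set.mem_setOf_eq, Set.mem_empty_iff_false, iff_false, not_and,
      Set.mem_univ, true_and]
    exact fun h1z h2z => key z h1z h2z
end

section
/- Let S be a join semilattice with a, b, c, x, y ∈ S satisfying a < c, x ≤ c, x ≤ a∨b, every common lower bound of b and c is ≤ y, a ≤ y, and x ≰ y. If v ∈ S satisfies v ≤ b and v ≤ c, then v < a∨v < x∨a∨v < a∨b, v < b < a∨b, a∨v ∥ b, and x∨a∨v ∥ b; hence {v, a∨v, x∨a∨v, b, a∨b} is a sub join-semilattice of S isomorphic to the pentagon M_4. -/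
variable {α : Type*}

theorem witnesses_v_give_M4 [SemilatticeSup α] (a b c x y v : α)
    (h1 : a < c) (h2 : x ≤ c) (h3 : x ≤ a ⊔ b)
    (h4 : ∀ z, z ≤ b → z ≤ c → z ≤ y) (h5 : a ≤ y) (h6 : ¬ x ≤ y)
    (hv1 : v ≤ b) (hv2 : v ≤ c) :
    v < a ⊔ v ∧ a ⊔ v < x ⊔ a ⊔ v ∧ x ⊔ a ⊔ v < a ⊔ b ∧
      v < b ∧ b < a ⊔ b ∧
      (¬ a ⊔ v ≤ b ∧ ¬ b ≤ a ⊔ v) ∧ (¬ x ⊔ a ⊔ v ≤ b ∧ ¬ b ≤ x ⊔ a ⊔ v) ∧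
      IsSubJoinSemilattice ({v, a ⊔ v, x ⊔ a ⊔ v, b, a ⊔ b} : Set α) ∧
      IsM4 ({v, a ⊔ v, x ⊔ a ⊔ v, b, a ⊔ b} : Set α) := by
  have hvy : v ≤ y := h4 v hv1 hv2
  have hnab : ¬ a ≤ b := fun h => h6 (h4 x (h3.trans (sup_le h le_rfl)) h2)
  have hnbU : ¬ b ≤ x ⊔ a ⊔ v := by
    intro h
    have hbc : b ≤ c := h.trans (sup_le (sup_le h2 h1.le) hv2)
    exact h6 (h3.trans (sup_le h5 (h4 b le_rfl hbc)))
  have hAU : a ⊔ v ≤ x ⊔ a ⊔ v := sup_le (le_sup_right.trans le_sup_left) le_sup_right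
  have hnav : ¬ a ≤ v := fun h => hnab (h.trans hv1)
  have hvA : v < a ⊔ v := lt_of_le_of_ne le_sup_right (fun h => hnav (h ▸ le_sup_left))
  have havy : a ⊔ v ≤ y := sup_le h5 hvy
  have hAU' : a ⊔ v < x ⊔ a ⊔ v := by
    refine lt_of_le_of_ne hAU (fun h => h6 ?_)
    have : x ⊔ a ⊔ v ≤ y := h ▸ havy
    exact (le_sup_left.trans le_sup_left).trans this
  have hUT : x ⊔ a ⊔ v ≤ a ⊔ b := sup_le (sup_le h3 le_sup_left) (hv1.trans le_sup_right)
  have hUT' : x ⊔ a ⊔ v < a ⊔ b := lt_of_le_of_ne hUT (fun h => hnbU (h ▸ le_sup_right))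
  have hvb : v < b := lt_of_le_of_ne hv1
    (fun h => h6 (h3.trans (sup_le h5 (h4 b le_rfl (h ▸ hv2)))))
  have hbT : b < a ⊔ b := lt_of_le_of_ne le_sup_right
    (fun h => hnab (h ▸ le_sup_left : a ≤ b))
  have hnAb : ¬ a ⊔ v ≤ b := fun h => hnab (le_sup_left.trans h)
  have hnbA : ¬ b ≤ a ⊔ v := fun h => hnbU (h.trans hAU)
  have hnUb : ¬ x ⊔ a ⊔ v ≤ b := fun h => hnAb (hAU.trans h)
  have e1 : (a ⊔ v) ⊔ b = a ⊔ b := le_antisymm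
    (sup_le (sup_le le_sup_left (hv1.trans le_sup_right)) le_sup_right)
    (sup_le (le_sup_left.trans le_sup_left) le_sup_right)
  have e2 : (x ⊔ a ⊔ v) ⊔ b = a ⊔ b := le_antisymm (sup_le hUT le_sup_right)
    (sup_le ((le_sup_right.trans le_sup_left : a ≤ x ⊔ a ⊔ v).trans le_sup_left) le_sup_right)
  have e1' : b ⊔ (a ⊔ v) = a ⊔ b := by rw [sup_comm, e1]
  have e2' : b ⊔ (x ⊔ a ⊔ v) = a ⊔ b := by rw [sup_comm, e2]
  have s1 : v ⊔ (a ⊔ v) = a ⊔ v := sup_eq_right.2 hvA.le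
  have s1' : (a ⊔ v) ⊔ v = a ⊔ v := sup_eq_left.2 hvA.le
  have s2 : v ⊔ (x ⊔ a ⊔ v) = x ⊔ a ⊔ v := sup_eq_right.2 (hvA.le.trans hAU)
  have s2' : (x ⊔ a ⊔ v) ⊔ v = x ⊔ a ⊔ v := sup_eq_left.2 (hvA.le.trans hAU)
  have s3 : v ⊔ b = b := sup_eq_right.2 hvb.le
  have s3' : b ⊔ v = b := sup_eq_left.2 hvb.le
  have s4 : v ⊔ (a ⊔ b) = a ⊔ b := sup_eq_right.2 (hvb.le.trans le_sup_right)
  have s4' : (a ⊔ b) ⊔ v = a ⊔ b := sup_eq_left.2 (hvb.le.trans le_sup_right)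
  have s5 : (a ⊔ v) ⊔ (x ⊔ a ⊔ v) = x ⊔ a ⊔ v := sup_eq_right.2 hAU
  have s5' : (x ⊔ a ⊔ v) ⊔ (a ⊔ v) = x ⊔ a ⊔ v := sup_eq_left.2 hAU
  have s6 : (a ⊔ v) ⊔ (a ⊔ b) = a ⊔ b := sup_eq_right.2 (hAU.trans hUT)
  have s6' : (a ⊔ b) ⊔ (a ⊔ v) = a ⊔ b := sup_eq_left.2 (hAU.trans hUT)
  have s7 : (x ⊔ a ⊔ v) ⊔ (a ⊔ b) = a ⊔ b := sup_eq_right.2 hUT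
  have s7' : (a ⊔ b) ⊔ (x ⊔ a ⊔ v) = a ⊔ b := sup_eq_left.2 hUT
  have s8 : b ⊔ (a ⊔ b) = a ⊔ b := sup_eq_right.2 le_sup_right
  have s8' : (a ⊔ b) ⊔ b = a ⊔ b := sup_eq_left.2 le_sup_right
  refine ⟨hvA, hAU', hUT', hvb, hbT, ⟨hnAb, hnbA⟩, ⟨hnUb, hnbU⟩, ?_, ?_⟩
  · intro p hp q hq
    simp only [Set.mem_insert_iff, Set.mem_singleton_iff] at hp hq ⊢
    rcases hp with rfl|rfl|rfl|rfl|rfl <;> rcases hq with rfl|rfl|rfl|rfl|rfl <;>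
      simp [s1, s1', s2, s2', s3, s3', s4, s4', s5, s5', s6, s6', s7, s7', s8, s8',
        e1, e1', e2, e2']
  · exact ⟨v, a ⊔ v, x ⊔ a ⊔ v, b, a ⊔ b, rfl, hvA, hAU', hUT', hvb, hbT,
      hnAb, hnbA, hnUb, hnbU, e1, e2⟩
end

section
/- If a join semilattice S is not o-modular, then S contains a semi-strong sub join-semilattice isomorphic to either M_2 or M_4. -/
variable {α : Type*}

/-- Core comparability facts shared by the M2 and M4 constructions. -/
private lemma m2_core [SemilatticeSup α] {a b C x u : α}
    (hCx : C ≤ x) (hCu : C ≤ u) (hxa : x ≤ a) (hxbC : x ≤ b ⊔ C)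
    (hxu : ¬ x ≤ u) (hLu : ∀ w, w ≤ a → w ≤ b → w ≤ u) :
    C < x ∧ x < b ⊔ C ∧ b < b ⊔ C ∧ ¬ C ≤ b ∧ ¬ b ≤ C ∧ ¬ x ≤ b ∧ ¬ b ≤ x ∧
      C ⊔ b = b ⊔ C ∧ x ⊔ b = b ⊔ C := by
  have hnxb : ¬ x ≤ b := fun h => hxu (hLu x hxa h)
  have hnbx : ¬ b ≤ x := fun h =>
    hxu (hxbC.trans (sup_le (hLu b (h.trans hxa) le_rfl) hCu))
  have hnCb : ¬ C ≤ b := fun h => hnxb (hxbC.trans (sup_le le_rfl h))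
  have hnbC : ¬ b ≤ C := fun h => hxu (hxbC.trans (sup_le (h.trans hCu) hCu))
  refine ⟨lt_of_le_of_ne hCx (fun h => hxu (h ▸ hCu)),
    lt_of_le_of_ne hxbC (fun h => hnbx (h ▸ le_sup_left)),
    lt_of_le_of_ne le_sup_left (fun h => hnCb (h ▸ le_sup_right)),
    hnCb, hnbC, hnxb, hnbx, sup_comm C b, ?_⟩
  exact le_antisymm (sup_le hxbC le_sup_left) (sup_le le_sup_right (hCx.trans le_sup_left))

theorem not_oModular_contains_semiStrong_M2_or_M4 [SemilatticeSup α]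
    (h : ¬ OModular α) :
    ∃ T : Set α, IsSubJoinSemilattice T ∧ SemiStrong T ∧ (IsM2 T ∨ IsM4 T) := by
  simp only [OModular, not_forall] at h
  obtain ⟨a, b, c, hca, hns⟩ := h
  rw [Set.not_subset] at hns
  obtain ⟨x₀, hx₀mem, hx₀n⟩ := hns
  have hx₀a : x₀ ≤ a := hx₀mem (by simp)
  have hx₀bc : x₀ ≤ b ⊔ c := hx₀mem (by simp)
  rw [lowerBounds, Set.mem_setOf_eq] at hx₀n
  push_neg at hx₀n
  obtain ⟨u, hu, hx₀u⟩ := hx₀n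
  have hcu : c ≤ u := hu (Or.inr rfl)
  have hLu : ∀ w, w ≤ a → w ≤ b → w ≤ u := fun w h1 h2 =>
    hu (Or.inl (fun y hy => by
      rcases hy with rfl | hy
      · exact h1
      · rw [Set.mem_singleton_iff] at hy; exact hy ▸ h2))
  set x := x₀ ⊔ c with hxdef
  have hxa : x ≤ a := sup_le hx₀a hca
  have hxbc : x ≤ b ⊔ c := sup_le hx₀bc le_sup_right
  have hcx : c ≤ x := le_sup_right
  have hxu : ¬ x ≤ u := fun h => hx₀u (le_sup_left.trans h)
  by_cases hz : ∃ z, z ≤ x ∧ z ≤ b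
  · -- M4 case
    obtain ⟨z, hzx, hzb⟩ := hz
    set C := z ⊔ c with hCdef
    have hCx : C ≤ x := sup_le hzx hcx
    have hCu : C ≤ u := sup_le (hLu z (hzx.trans hxa) hzb) hcu
    have hxbC : x ≤ b ⊔ C := hxbc.trans (sup_le le_sup_left (le_sup_right.trans le_sup_right))
    obtain ⟨h1, h2, h3, h4, h5, h6, h7, h8, h9⟩ := m2_core hCx hCu hxa hxbC hxu hLu
    set t := b ⊔ C with htdef
    refine ⟨{z, C, x, b, t}, ?_, ?_,
      Or.inr ⟨z, C, x, b, t, rfl, ?_, h1, h2, ?_, h3, h4, h5, h6, h7, h8, h9⟩⟩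
    · -- join closed
      have hzC : z ≤ C := le_sup_left
      have hzt : z ≤ t := le_sup_left.trans le_sup_right
      have hCt : C ≤ t := le_sup_right
      have hxt : x ≤ t := h2.le
      have hbt : b ≤ t := le_sup_left
      have hbx : b ⊔ x = t := (sup_comm b x).trans h9
      have hbC : b ⊔ C = t := rfl
      intro p hp q hq
      simp only [Set.mem_insert_iff, Set.mem_singleton_iff] at hp hq ⊢
      rcases hp with rfl | rfl | rfl | rfl | rfl <;> rcases hq with rfl | rfl | rfl | rfl | rfl <;>
        simp [sup_eq_right.2, sup_eq_left.2, hzC, hzx, hzb, hzt, hCx, hCt, hxt, hbt,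
          hcx, h8, h9, hbx, hbC]
    · -- semi-strong: z is below everything
      intro p hp q hq hemp
      exfalso
      have hzall : ∀ w ∈ ({z, C, x, b, t} : Set α), z ≤ w := by
        intro w hw
        simp only [Set.mem_insert_iff, Set.mem_singleton_iff] at hw
        rcases hw with rfl | rfl | rfl | rfl | rfl
        · exact le_rfl
        · exact le_sup_left
        · exact hzx
        · exact hzb
        · exact le_sup_left.trans le_sup_right
      have hmem : z ∈ L2 ({z, C, x, b, t} : Set α) p q :=
        ⟨by simp, hzall p hp, hzall q hq⟩
      rw [hemp] at hmem
      exact hmem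
    · exact lt_of_le_of_ne le_sup_left
        (fun h => h4 (sup_le hzb ((le_sup_right.trans h.ge).trans hzb)))
    · exact lt_of_le_of_ne hzb (fun h => h7 (h ▸ hzx))
  · -- M2 case
    push_neg at hz
    obtain ⟨h1, h2, h3, h4, h5, h6, h7, h8, h9⟩ := m2_core hcx hcu hxa hxbc hxu hLu
    set t := b ⊔ c with htdef
    refine ⟨{c, x, b, t}, ?_, ?_,
      Or.inl ⟨c, x, b, t, rfl, h1, h2, h3, h4, h5, h6, h7, h8, h9⟩⟩
    · -- join closed
      have hct : c ≤ t := le_sup_right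
      have hxt : x ≤ t := h2.le
      have hbt : b ≤ t := le_sup_left
      have hbx : b ⊔ x = t := (sup_comm b x).trans h9
      have hbc' : b ⊔ c = t := rfl
      intro p hp q hq
      simp only [Set.mem_insert_iff, Set.mem_singleton_iff] at hp hq ⊢
      rcases hp with rfl | rfl | rfl | rfl <;> rcases hq with rfl | rfl | rfl | rfl <;>
        simp [sup_eq_right.2, sup_eq_left.2, hcx, hct, hxt, hbt, h8, h9, hbx, hbc']
    · -- semi-strong
      intro p hp q hq hemp
      simp only [Set.mem_insert_iff, Set.mem_singleton_iff] at hp hq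
      have hct : c ≤ t := le_sup_right
      have hxt : x ≤ t := h2.le
      have hbt : b ≤ t := le_sup_left
      have wit : ∀ w, w ∈ ({c, x, b, t} : Set α) → w ≤ p → w ≤ q → False := by
        intro w hw h1' h2'
        have hmem : w ∈ L2 ({c, x, b, t} : Set α) p q := ⟨hw, h1', h2'⟩
        rw [hemp] at hmem; exact hmem
      have memc : c ∈ ({c, x, b, t} : Set α) := by simp
      have memx : x ∈ ({c, x, b, t} : Set α) := by simp
      have memb : b ∈ ({c, x, b, t} : Set α) := by simp
      have memt : t ∈ ({c, x, b, t} : Set α) := by simp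
      have empt : ∀ p' q' : α, p' ≤ x → q' ≤ b → L2 Set.univ p' q' = ∅ := by
        intro p' q' hp' hq'
        ext w
        simp only [L2, Set.mem_setOf_eq, Set.mem_empty_iff_false, iff_false, not_and,
          Set.mem_univ, true_and]
        intro hw1 hw2
        exact hz w (hw1.trans hp') (hw2.trans hq')
      have empt' : ∀ p' q' : α, p' ≤ b → q' ≤ x → L2 Set.univ p' q' = ∅ := by
        intro p' q' hp' hq'
        ext w
        simp only [L2, Set.mem_setOf_eq, Set.mem_empty_iff_false, iff_false, not_and,
          Set.mem_univ, true_and]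
        intro hw1 hw2
        exact hz w (hw2.trans hq') (hw1.trans hp')
      rcases hp with hpe | hpe | hpe | hpe <;> rcases hq with hqe | hqe | hqe | hqe
      · exact (wit c memc hpe.ge hqe.ge).elim
      · exact (wit c memc hpe.ge (hcx.trans hqe.ge)).elim
      · exact empt p q (hpe.le.trans hcx) hqe.le
      · exact (wit c memc hpe.ge (hct.trans hqe.ge)).elim
      · exact (wit c memc (hcx.trans hpe.ge) hqe.ge).elim
      · exact (wit x memx hpe.ge hqe.ge).elim
      · exact empt p q hpe.le hqe.le
      · exact (wit x memx hpe.ge (hxt.trans hqe.ge)).elim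
      · exact empt' p q hpe.le (hqe.le.trans hcx)
      · exact empt' p q hpe.le hqe.le
      · exact (wit b memb hpe.ge hqe.ge).elim
      · exact (wit b memb hpe.ge (hbt.trans hqe.ge)).elim
      · exact (wit c memc (hct.trans hpe.ge) hqe.ge).elim
      · exact (wit x memx (hxt.trans hpe.ge) hqe.ge).elim
      · exact (wit b memb (hbt.trans hpe.ge) hqe.ge).elim
      · exact (wit t memt hpe.ge hqe.ge).elim
end
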